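/- Let X be a real random variable whose cdf F is continuous, let G : ℝ → [0,1] be any cumulative distribution function with quantile function G^{-1}(u) := inf{x ∈ ℝ : G(x) ≥ u}, and let p ≥ 1. Then E[ |X − G^{-1}(F(X))|^p ] = ∫₀¹ |F^{-1}(u) − G^{-1}(u)|^p du, where both sides may simultaneously be +∞. In particular, the comonotonic rearrangement X_c := G^{-1}(F(X)) of X to the law G realises the quantile-based p-distance ∫₀¹ |F^{-1}(u) − G^{-1}(u)|^p du as an expectation over X. -/

import Mathlib

open MeasureTheory Set
open scoped Filter

set_option linter.unusedSectionVars false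
set_option linter.unusedVariables false

section Aux
open Filter

variable {Ω : Type*} [MeasurableSpace Ω] (ℙ : Measure Ω) [IsProbabilityMeasure ℙ]
  (X : Ω → ℝ) (hXmeas : Measurable X)
  (F : ℝ → ℝ) (hF : ∀ x, F x = (ℙ {ω | X ω ≤ x}).toReal) (hFcont : Continuous F)

include hF hXmeas in
lemma aux_ofReal_F (x : ℝ) : ENNReal.ofReal (F x) = ℙ {ω | X ω ≤ x} := by
  rw [hF x, ENNReal.ofReal_toReal (measure_ne_top _ _)]

include hF hXmeas in
lemma aux_F_eq_cdf : F = fun x => ProbabilityTheory.cdf (ℙ.map X) x := by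
  have : IsProbabilityMeasure (ℙ.map X) := Measure.isProbabilityMeasure_map hXmeas.aemeasurable
  funext x
  rw [ProbabilityTheory.cdf_eq_real, measureReal_def, Measure.map_apply hXmeas measurableSet_Iic, hF x]
  rfl

include hF hXmeas in
lemma aux_F_mono : Monotone F := by
  rw [aux_F_eq_cdf ℙ X hXmeas F hF]
  exact ProbabilityTheory.monotone_cdf _

include hF hXmeas in
lemma aux_F_nonneg (x : ℝ) : 0 ≤ F x := by rw [hF x]; positivity

include hF hXmeas in
lemma aux_F_le_one (x : ℝ) : F x ≤ 1 := by
  rw [hF x]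
  exact ENNReal.toReal_le_of_le_ofReal one_pos.le (by simpa using prob_le_one)

include hF hXmeas in
lemma aux_F_atBot : Tendsto F atBot (nhds 0) := by
  rw [aux_F_eq_cdf ℙ X hXmeas F hF]
  have : IsProbabilityMeasure (ℙ.map X) := Measure.isProbabilityMeasure_map hXmeas.aemeasurable
  exact ProbabilityTheory.tendsto_cdf_atBot _

include hF hXmeas in
lemma aux_F_atTop : Tendsto F atTop (nhds 1) := by
  rw [aux_F_eq_cdf ℙ X hXmeas F hF]
  have : IsProbabilityMeasure (ℙ.map X) := Measure.isProbabilityMeasure_map hXmeas.aemeasurable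
  exact ProbabilityTheory.tendsto_cdf_atTop _

include hF hXmeas hFcont in
/-- The law of `F ∘ X` is uniform on `(0,1)`. -/
lemma aux_map_uniform :
    ℙ.map (fun ω => F (X ω)) = volume.restrict (Ioo (0:ℝ) 1) := by
  have hmono := aux_F_mono ℙ X hXmeas F hF
  have hnn := aux_F_nonneg ℙ X hXmeas F hF
  have hle1 := aux_F_le_one ℙ X hXmeas F hF
  have hbot := aux_F_atBot ℙ X hXmeas F hF
  have htop := aux_F_atTop ℙ X hXmeas F hF
  have hFXmeas : Measurable fun ω => F (X ω) := hFcont.measurable.comp hXmeas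
  have hprob : IsProbabilityMeasure (ℙ.map (fun ω => F (X ω))) :=
    Measure.isProbabilityMeasure_map hFXmeas.aemeasurable
  refine Measure.ext_of_Iic _ _ (fun t => ?_)
  rw [Measure.map_apply hFXmeas measurableSet_Iic,
    Measure.restrict_apply measurableSet_Iic]
  rcases lt_or_ge t 0 with ht | ht
  · have h1 : (fun ω => F (X ω)) ⁻¹' Iic t = ∅ := by
      ext ω; simp only [mem_preimage, mem_Iic, mem_empty_iff_false, iff_false, not_le]
      exact lt_of_lt_of_le ht (hnn _)
    have h2 : Iic t ∩ Ioo (0:ℝ) 1 = ∅ := by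
      ext x; simp only [mem_inter_iff, mem_Iic, mem_Ioo, mem_empty_iff_false, iff_false]
      rintro ⟨hx1, hx2, -⟩; exact absurd (hx1.trans ht.le) (not_le.2 hx2)
    rw [h1, h2]
    simp
  rcases le_or_gt 1 t with ht1 | ht1
  · have h1 : (fun ω => F (X ω)) ⁻¹' Iic t = univ := by
      ext ω; simp only [mem_preimage, mem_Iic, mem_univ, iff_true]
      exact (hle1 _).trans ht1
    have h2 : Iic t ∩ Ioo (0:ℝ) 1 = Ioo 0 1 := by
      refine inter_eq_self_of_subset_right (fun x hx => ?_)
      exact mem_Iic.2 (hx.2.le.trans ht1)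
    rw [h1, h2, Real.volume_Ioo]
    simp
  -- main case : 0 ≤ t < 1
  · have h2 : Iic t ∩ Ioo (0:ℝ) 1 = Ioc 0 t := by
      ext x
      simp only [mem_inter_iff, mem_Iic, mem_Ioo, mem_Ioc]
      constructor
      · rintro ⟨h1, h2, h3⟩; exact ⟨h2, h1⟩
      · rintro ⟨h1, h2⟩; exact ⟨h2, h1, lt_of_le_of_lt h2 ht1⟩
    rw [h2, Real.volume_Ioc, sub_zero]
    set A : Set ℝ := {x | F x ≤ t} with hA
    have hpre : (fun ω => F (X ω)) ⁻¹' Iic t = X ⁻¹' A := rfl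
    rcases eq_empty_or_nonempty A with hAe | hAne
    · -- then t = 0
      have ht0 : t ≤ 0 := by
        by_contra h
        push_neg at h
        obtain ⟨y, hy⟩ := (hbot.eventually_lt_const h).exists
        have hyA : y ∈ A := hy.le
        rw [hAe] at hyA
        exact hyA
      have ht' : t = 0 := le_antisymm ht0 ht
      rw [hpre, hAe, ht']
      simp
    · have hbdd : BddAbove A := by
        obtain ⟨y, hy⟩ := (htop.eventually_const_lt ht1).exists
        exact ⟨y, fun x hx => le_of_not_gt fun h => ((hy.trans_le (hmono h.le)).not_ge hx)⟩
      have hAclosed : IsClosed A := isClosed_le hFcont continuous_const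
      set a := sSup A with ha
      have haA : a ∈ A := hAclosed.csSup_mem hAne hbdd
      have hFa : F a ≤ t := haA
      have hFat : F a = t := by
        by_contra h
        have hlt : F a < t := lt_of_le_of_ne hFa h
        have hev : ∀ᶠ y in nhds a, F y < t :=
          (hFcont.tendsto a).eventually_lt_const hlt
        have hev' : ∀ᶠ y in nhdsWithin a (Ioi a), F y < t ∧ y ∈ Ioi a :=
          (hev.filter_mono nhdsWithin_le_nhds).and self_mem_nhdsWithin
        obtain ⟨b, hbF, hba⟩ := hev'.exists
        exact absurd (le_csSup hbdd (hbF.le : b ∈ A)) (not_le.2 hba)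
      have hAIic : A = Iic a := by
        ext x
        constructor
        · exact fun hx => le_csSup hbdd hx
        · exact fun hx => le_trans (hmono hx) hFa
      rw [hpre, hAIic]
      have : X ⁻¹' Iic a = {ω | X ω ≤ a} := rfl
      rw [this, ← aux_ofReal_F ℙ X hXmeas F hF a, hFat]

include hF hXmeas hFcont in
lemma aux_ae (Finv : ℝ → ℝ) (hFinv : ∀ u, Finv u = sInf {x : ℝ | u ≤ F x}) :
    ∀ᵐ ω ∂ℙ, Finv (F (X ω)) = X ω := by
  have hmono := aux_F_mono ℙ X hXmeas F hF
  have hnn := aux_F_nonneg ℙ X hXmeas F hF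
  have hbot := aux_F_atBot ℙ X hXmeas F hF
  have hFXmeas : Measurable fun ω => F (X ω) := hFcont.measurable.comp hXmeas
  have hmap := aux_map_uniform ℙ X hXmeas F hF hFcont
  have hnull : ∀ c : ℝ, ℙ {ω | F (X ω) = c} = 0 := by
    intro c
    have h1 : {ω | F (X ω) = c} = (fun ω => F (X ω)) ⁻¹' {c} := rfl
    rw [h1, ← Measure.map_apply hFXmeas (measurableSet_singleton c), hmap,
      Measure.restrict_apply (measurableSet_singleton c)]
    exact measure_mono_null inter_subset_left Real.volume_singleton
  have hE : ℙ ({ω | F (X ω) = 0} ∪ ⋃ q : ℚ, {ω | F (X ω) = F q}) = 0 :=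
    measure_union_null (hnull 0) (measure_iUnion_null fun q => hnull _)
  rw [Filter.eventually_iff, mem_ae_iff]
  refine measure_mono_null (fun ω hω => ?_) hE
  simp only [mem_compl_iff, mem_setOf_eq] at hω
  by_contra hcon
  apply hω; clear hω
  simp only [mem_union, mem_iUnion, mem_setOf_eq] at hcon
  push_neg at hcon
  obtain ⟨h0, hq⟩ := hcon
  set x := X ω with hx
  have hx0 : 0 < F x := lt_of_le_of_ne (hnn x) (Ne.symm h0)
  set S : Set ℝ := {y | F x ≤ F y} with hS
  have hSx : x ∈ S := mem_setOf_eq ▸ le_refl (F x)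
  have hSbdd : BddBelow S := by
    obtain ⟨y, hy⟩ := (hbot.eventually_lt_const hx0).exists
    exact ⟨y, fun z hz => le_of_not_gt fun h => (((hmono h.le).trans_lt hy).not_ge hz)⟩
  have hSclosed : IsClosed S := isClosed_le continuous_const hFcont
  have haS : sInf S ∈ S := hSclosed.csInf_mem ⟨x, hSx⟩ hSbdd
  have hax : sInf S ≤ x := csInf_le hSbdd hSx
  rw [hFinv]
  rcases hax.lt_or_eq with h | h
  · obtain ⟨q, haq, hqx⟩ := exists_rat_btwn h
    have h1 : F x ≤ F q := haS.trans (hmono haq.le)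
    have h2 : F (q : ℝ) ≤ F x := hmono hqx.le
    exact absurd (le_antisymm h1 h2) (hq q)
  · exact h

end Aux


/-- The comonotonic rearrangement `X_c := G⁻¹(F(X))` of `X` to the law `G`
realises the quantile-based `p`-distance:
`E[|X - G⁻¹(F(X))|^p] = ∫₀¹ |F⁻¹(u) - G⁻¹(u)|^p du`,
where both sides may simultaneously be `+∞` (hence stated with `∫⁻`). -/
theorem comonotonic_transport
    {Ω : Type*} [MeasurableSpace Ω] (ℙ : Measure Ω) [IsProbabilityMeasure ℙ]
    (X : Ω → ℝ) (hXmeas : Measurable X)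
    -- F : the cdf of X, assumed continuous
    (F : ℝ → ℝ) (hF : ∀ x, F x = (ℙ {ω | X ω ≤ x}).toReal) (hFcont : Continuous F)
    -- G : any cumulative distribution function on ℝ
    (G : ℝ → ℝ) (hGmono : Monotone G)
    (hGrc : ∀ x, ContinuousWithinAt G (Ici x) x)
    (hGrange : ∀ x, G x ∈ Icc (0:ℝ) 1)
    (hG0 : Filter.Tendsto G Filter.atBot (nhds 0))
    (hG1 : Filter.Tendsto G Filter.atTop (nhds 1))
    -- quantile functions (generalised inverses)
    (Finv Ginv : ℝ → ℝ)
    (hFinv : ∀ u, Finv u = sInf {x : ℝ | u ≤ F x})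
    (hGinv : ∀ u, Ginv u = sInf {x : ℝ | u ≤ G x})
    (p : ℝ) (hp : 1 ≤ p) :
    ∫⁻ ω, ENNReal.ofReal (|X ω - Ginv (F (X ω))| ^ p) ∂ℙ
      = ∫⁻ u in Ioo (0:ℝ) 1, ENNReal.ofReal (|Finv u - Ginv u| ^ p) := by
  have hFXmeas : Measurable fun ω => F (X ω) := hFcont.measurable.comp hXmeas
  have hmap := aux_map_uniform ℙ X hXmeas F hF hFcont
  have hmono := aux_F_mono ℙ X hXmeas F hF
  have hbot := aux_F_atBot ℙ X hXmeas F hF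
  have htop := aux_F_atTop ℙ X hXmeas F hF
  have hFinvMono : MonotoneOn Finv (Ioo (0:ℝ) 1) := by
    intro u hu v hv huv
    rw [hFinv u, hFinv v]
    refine csInf_le_csInf ?_ ?_ (fun x hx => le_trans huv hx)
    · obtain ⟨y, hy⟩ := (hbot.eventually_lt_const hu.1).exists
      exact ⟨y, fun z hz => le_of_not_gt fun h => (((hmono h.le).trans_lt hy).not_ge hz)⟩
    · obtain ⟨y, hy⟩ := (htop.eventually_const_lt hv.2).exists
      exact ⟨y, hy.le⟩
  have hGinvMono : MonotoneOn Ginv (Ioo (0:ℝ) 1) := by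
    intro u hu v hv huv
    rw [hGinv u, hGinv v]
    refine csInf_le_csInf ?_ ?_ (fun x hx => le_trans huv hx)
    · obtain ⟨y, hy⟩ := (hG0.eventually_lt_const hu.1).exists
      exact ⟨y, fun z hz => le_of_not_gt fun h => (((hGmono h.le).trans_lt hy).not_ge hz)⟩
    · obtain ⟨y, hy⟩ := (hG1.eventually_const_lt hv.2).exists
      exact ⟨y, hy.le⟩
  have aemF : AEMeasurable Finv (volume.restrict (Ioo (0:ℝ) 1)) :=
    aemeasurable_restrict_of_monotoneOn measurableSet_Ioo hFinvMono
  have aemG : AEMeasurable Ginv (volume.restrict (Ioo (0:ℝ) 1)) :=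
    aemeasurable_restrict_of_monotoneOn measurableSet_Ioo hGinvMono
  have hk : Measurable fun y : ℝ => ENNReal.ofReal (|y| ^ p) := by fun_prop
  have hh : AEMeasurable (fun u => ENNReal.ofReal (|Finv u - Ginv u| ^ p))
      (volume.restrict (Ioo (0:ℝ) 1)) := hk.comp_aemeasurable (aemF.sub aemG)
  have hae := aux_ae ℙ X hXmeas F hF hFcont Finv hFinv
  have step1 : ∫⁻ ω, ENNReal.ofReal (|X ω - Ginv (F (X ω))| ^ p) ∂ℙ
      = ∫⁻ ω, ENNReal.ofReal (|Finv (F (X ω)) - Ginv (F (X ω))| ^ p) ∂ℙ := by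
    refine lintegral_congr_ae ?_
    filter_upwards [hae] with ω hω
    rw [hω]
  rw [step1]
  have hh' : AEMeasurable (fun u => ENNReal.ofReal (|Finv u - Ginv u| ^ p))
      (ℙ.map fun ω => F (X ω)) := by rw [hmap]; exact hh
  rw [← lintegral_map' hh' hFXmeas.aemeasurable, hmap]
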